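/- Let w : ℝ²\{0} → ℝ be defined by w(x) = |x|² v(x/|x|²) where v : ℝ² → ℝ is C². Then for x ≠ 0, Δw(x) = 4 v(i(x)) - 4⟨∇v(i(x)), i(x)⟩ + |x|⁻² Δv(i(x)), where i(x) = x/|x|². -/

import Mathlib

/-- First partial derivative (flat, on ℝ²). -/
noncomputable def pd1 (f : ℝ × ℝ → ℝ) (x : ℝ × ℝ) : ℝ := fderiv ℝ f x (1, 0)

/-- Second partial derivative (flat, on ℝ²). -/
noncomputable def pd2 (f : ℝ × ℝ → ℝ) (x : ℝ × ℝ) : ℝ := fderiv ℝ f x (0, 1)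

/-- Flat Laplacian on ℝ². -/
noncomputable def lap (f : ℝ × ℝ → ℝ) (x : ℝ × ℝ) : ℝ := pd1 (pd1 f) x + pd2 (pd2 f) x

/-- Planar inversion `i(x) = x / |x|²`. -/
noncomputable def inv2 (x : ℝ × ℝ) : ℝ × ℝ :=
  (x.1 / (x.1 ^ 2 + x.2 ^ 2), x.2 / (x.1 ^ 2 + x.2 ^ 2))

lemma clm_eval (L : (ℝ×ℝ) →L[ℝ] ℝ) (a b : ℝ) : L (a,b) = a * L (1,0) + b * L (0,1) := by
  have h : ((a,b) : ℝ×ℝ) = a • ((1:ℝ),(0:ℝ)) + b • ((0:ℝ),(1:ℝ)) := by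
    simp [Prod.ext_iff]
  rw [h, map_add, map_smul, map_smul]; simp

lemma n_pos {y : ℝ×ℝ} (hy : y ≠ 0) : 0 < y.1^2+y.2^2 := by
  by_contra h; push_neg at h
  have h1 : y.1 = 0 := by nlinarith [sq_nonneg y.1, sq_nonneg y.2]
  have h2 : y.2 = 0 := by nlinarith [sq_nonneg y.1, sq_nonneg y.2]
  exact hy (by rw [Prod.ext_iff]; exact ⟨h1, h2⟩)

lemma hasDerivAt_comp2 {G : ℝ×ℝ→ℝ} {γ₁ γ₂ : ℝ→ℝ} {t d1 d2 : ℝ}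
    (h1 : HasDerivAt γ₁ d1 t) (h2 : HasDerivAt γ₂ d2 t)
    (hG : DifferentiableAt ℝ G (γ₁ t, γ₂ t)) :
    HasDerivAt (fun s => G (γ₁ s, γ₂ s)) (d1 * pd1 G (γ₁ t, γ₂ t) + d2 * pd2 G (γ₁ t, γ₂ t)) t := by
  have h := hG.hasFDerivAt.comp_hasDerivAt t (h1.prodMk h2)
  have e : fderiv ℝ G (γ₁ t, γ₂ t) (d1, d2)
      = d1 * pd1 G (γ₁ t, γ₂ t) + d2 * pd2 G (γ₁ t, γ₂ t) := by
    rw [clm_eval]; rfl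
  rwa [e] at h

lemma pd1_eq' {f : ℝ×ℝ→ℝ} {x : ℝ×ℝ} (g : ℝ→ℝ) {d : ℝ} (hf : DifferentiableAt ℝ f x)
    (hg : ∀ t, f (t, x.2) = g t) (h : HasDerivAt g d x.1) : pd1 f x = d := by
  have h' : HasDerivAt (fun t => f (t, x.2)) (fderiv ℝ f x (1,0)) x.1 := by
    have := hf.hasFDerivAt.comp_hasDerivAt x.1
      ((hasDerivAt_id x.1).prodMk (hasDerivAt_const x.1 x.2))
    exact this
  have h'' : HasDerivAt g (fderiv ℝ f x (1,0)) x.1 := by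
    simpa [funext hg] using h'
  exact h''.unique h

lemma pd2_eq' {f : ℝ×ℝ→ℝ} {x : ℝ×ℝ} (g : ℝ→ℝ) {d : ℝ} (hf : DifferentiableAt ℝ f x)
    (hg : ∀ t, f (x.1, t) = g t) (h : HasDerivAt g d x.2) : pd2 f x = d := by
  have h' : HasDerivAt (fun t => f (x.1, t)) (fderiv ℝ f x (0,1)) x.2 := by
    have := hf.hasFDerivAt.comp_hasDerivAt x.2
      ((hasDerivAt_const x.2 x.1).prodMk (hasDerivAt_id x.2))
    exact this
  have h'' : HasDerivAt g (fderiv ℝ f x (0,1)) x.2 := by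
    simpa [funext hg] using h'
  exact h''.unique h

/-- differentiability of inv2 away from 0 -/
lemma diff_inv2 {y : ℝ×ℝ} (hy : y ≠ 0) : DifferentiableAt ℝ inv2 y := by
  have hne : y.1^2+y.2^2 ≠ 0 := (n_pos hy).ne'
  have hN : DifferentiableAt ℝ (fun y : ℝ×ℝ => y.1^2+y.2^2) y :=
    (differentiableAt_fst.pow 2).add (differentiableAt_snd.pow 2)
  apply DifferentiableAt.prodMk
  · simp only [div_eq_mul_inv]; exact differentiableAt_fst.mul (hN.inv hne)
  · simp only [div_eq_mul_inv]; exact differentiableAt_snd.mul (hN.inv hne)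

noncomputable def E1 (v : ℝ×ℝ→ℝ) (y : ℝ×ℝ) : ℝ :=
  2*y.1 * v (inv2 y) + pd1 v (inv2 y) * ((y.1^2+y.2^2-2*y.1^2)/(y.1^2+y.2^2))
    + pd2 v (inv2 y) * (-(2*y.1*y.2)/(y.1^2+y.2^2))

noncomputable def E2 (v : ℝ×ℝ→ℝ) (y : ℝ×ℝ) : ℝ :=
  2*y.2 * v (inv2 y) + pd1 v (inv2 y) * (-(2*y.1*y.2)/(y.1^2+y.2^2))
    + pd2 v (inv2 y) * ((y.1^2+y.2^2-2*y.2^2)/(y.1^2+y.2^2))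

lemma pd1W (v : ℝ×ℝ→ℝ) (hv : ContDiff ℝ 2 v) (y : ℝ×ℝ) (hy : y ≠ 0) :
    pd1 (fun y => (y.1 ^ 2 + y.2 ^ 2) * v (inv2 y)) y = E1 v y := by
  have hne : y.1^2+y.2^2 ≠ 0 := (n_pos hy).ne'
  have hvd : Differentiable ℝ v := hv.differentiable (by norm_num)
  -- 2-variable differentiability
  have hN : DifferentiableAt ℝ (fun y : ℝ×ℝ => y.1^2+y.2^2) y :=
    (differentiableAt_fst.pow 2).add (differentiableAt_snd.pow 2)
  have hW : DifferentiableAt ℝ (fun y : ℝ×ℝ => (y.1 ^ 2 + y.2 ^ 2) * v (inv2 y)) y :=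
    hN.mul ((hvd (inv2 y)).comp y (diff_inv2 hy))
  -- 1-variable derivative
  have hden : HasDerivAt (fun t => t^2+y.2^2) (2*y.1) y.1 := by
    simpa using (hasDerivAt_pow 2 y.1).add_const (y.2^2)
  have hγ1 : HasDerivAt (fun t => t/(t^2+y.2^2)) ((y.2^2-y.1^2)/(y.1^2+y.2^2)^2) y.1 := by
    have := (hasDerivAt_id y.1).div hden hne
    refine this.congr_deriv ?_; simp only [id]
    field_simp; ring
  have hγ2 : HasDerivAt (fun t => y.2/(t^2+y.2^2)) (-(2*y.1*y.2)/(y.1^2+y.2^2)^2) y.1 := by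
    have := (hasDerivAt_const y.1 y.2).div hden hne
    refine this.congr_deriv ?_
    field_simp; ring
  have hVc := hasDerivAt_comp2 hγ1 hγ2 (hvd _)
  have H := hden.mul hVc
  refine pd1_eq' (fun t => (t^2+y.2^2) * v (t/(t^2+y.2^2), y.2/(t^2+y.2^2))) hW
    (fun t => by simp only [inv2]) ?_
  refine H.congr_deriv ?_
  simp only [E1, inv2]
  field_simp
  ring

lemma pd2W (v : ℝ×ℝ→ℝ) (hv : ContDiff ℝ 2 v) (y : ℝ×ℝ) (hy : y ≠ 0) :
    pd2 (fun y => (y.1 ^ 2 + y.2 ^ 2) * v (inv2 y)) y = E2 v y := by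
  have hne : y.1^2+y.2^2 ≠ 0 := (n_pos hy).ne'
  have hvd : Differentiable ℝ v := hv.differentiable (by norm_num)
  have hN : DifferentiableAt ℝ (fun y : ℝ×ℝ => y.1^2+y.2^2) y :=
    (differentiableAt_fst.pow 2).add (differentiableAt_snd.pow 2)
  have hW : DifferentiableAt ℝ (fun y : ℝ×ℝ => (y.1 ^ 2 + y.2 ^ 2) * v (inv2 y)) y :=
    hN.mul ((hvd (inv2 y)).comp y (diff_inv2 hy))
  have hden : HasDerivAt (fun t => y.1^2+t^2) (2*y.2) y.2 := by
    simpa using (hasDerivAt_pow 2 y.2).const_add (y.1^2)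
  have hγ1 : HasDerivAt (fun t => y.1/(y.1^2+t^2)) (-(2*y.1*y.2)/(y.1^2+y.2^2)^2) y.2 := by
    have := (hasDerivAt_const y.2 y.1).div hden hne
    refine this.congr_deriv ?_
    field_simp; ring
  have hγ2 : HasDerivAt (fun t => t/(y.1^2+t^2)) ((y.1^2-y.2^2)/(y.1^2+y.2^2)^2) y.2 := by
    have := (hasDerivAt_id y.2).div hden hne
    refine this.congr_deriv ?_; simp only [id]
    field_simp; ring
  have hVc := hasDerivAt_comp2 hγ1 hγ2 (hvd _)
  have H := hden.mul hVc
  refine pd2_eq' (fun t => (y.1^2+t^2) * v (y.1/(y.1^2+t^2), t/(y.1^2+t^2))) hW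
    (fun t => by simp only [inv2]) ?_
  refine H.congr_deriv ?_
  simp only [E2, inv2]
  field_simp
  ring

lemma schwarz {v : ℝ×ℝ→ℝ} (hv : ContDiff ℝ 2 v) (z : ℝ×ℝ) :
    pd2 (pd1 v) z = pd1 (pd2 v) z := by
  have hd : DifferentiableAt ℝ (fderiv ℝ v) z :=
    ((hv.fderiv_right (m := 1) (by norm_num)).differentiable (by norm_num)).differentiableAt
  have h1 : HasFDerivAt (fun y => fderiv ℝ v y ((1:ℝ),(0:ℝ)))
      ((fderiv ℝ (fderiv ℝ v) z).flip ((1:ℝ),(0:ℝ))) z := by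
    have := hd.hasFDerivAt.clm_apply (hasFDerivAt_const ((1:ℝ),(0:ℝ)) z)
    simpa using this
  have h2 : HasFDerivAt (fun y => fderiv ℝ v y ((0:ℝ),(1:ℝ)))
      ((fderiv ℝ (fderiv ℝ v) z).flip ((0:ℝ),(1:ℝ))) z := by
    have := hd.hasFDerivAt.clm_apply (hasFDerivAt_const ((0:ℝ),(1:ℝ)) z)
    simpa using this
  have hsym := ((hv.contDiffAt (x := z)).isSymmSndFDerivAt (n := 2) (by norm_num)) (1,0) (0,1)
  show fderiv ℝ (pd1 v) z (0,1) = fderiv ℝ (pd2 v) z (1,0)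
  have e1 : fderiv ℝ (pd1 v) z = (fderiv ℝ (fderiv ℝ v) z).flip ((1:ℝ),(0:ℝ)) := h1.fderiv
  have e2 : fderiv ℝ (pd2 v) z = (fderiv ℝ (fderiv ℝ v) z).flip ((0:ℝ),(1:ℝ)) := h2.fderiv
  rw [e1, e2]
  simpa using hsym.symm

lemma contDiff_pd1 {v : ℝ×ℝ→ℝ} (hv : ContDiff ℝ 2 v) : ContDiff ℝ 1 (pd1 v) :=
  (hv.fderiv_right (m := 1) (by norm_num)).clm_apply contDiff_const

lemma contDiff_pd2 {v : ℝ×ℝ→ℝ} (hv : ContDiff ℝ 2 v) : ContDiff ℝ 1 (pd2 v) :=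
  (hv.fderiv_right (m := 1) (by norm_num)).clm_apply contDiff_const

lemma pd1E1 (v : ℝ×ℝ→ℝ) (hv : ContDiff ℝ 2 v) (x : ℝ×ℝ) (hx : x ≠ 0) :
    pd1 (E1 v) x =
      (2 * v (inv2 x)
        + 2*x.1 * ((x.2^2-x.1^2)/(x.1^2+x.2^2)^2 * pd1 v (inv2 x)
            + -(2*x.1*x.2)/(x.1^2+x.2^2)^2 * pd2 v (inv2 x))
      + (((x.2^2-x.1^2)/(x.1^2+x.2^2)^2 * pd1 (pd1 v) (inv2 x)
            + -(2*x.1*x.2)/(x.1^2+x.2^2)^2 * pd2 (pd1 v) (inv2 x))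
          * ((x.1^2+x.2^2-2*x.1^2)/(x.1^2+x.2^2))
         + pd1 v (inv2 x) * (-(4*x.1*x.2^2)/(x.1^2+x.2^2)^2)))
      + (((x.2^2-x.1^2)/(x.1^2+x.2^2)^2 * pd1 (pd2 v) (inv2 x)
            + -(2*x.1*x.2)/(x.1^2+x.2^2)^2 * pd2 (pd2 v) (inv2 x))
          * (-(2*x.1*x.2)/(x.1^2+x.2^2))
         + pd2 v (inv2 x) * ((2*x.2*(x.1^2-x.2^2))/(x.1^2+x.2^2)^2)) := by
  have hne : x.1^2+x.2^2 ≠ 0 := (n_pos hx).ne'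
  have hvd : Differentiable ℝ v := hv.differentiable (by norm_num)
  have hg1d : Differentiable ℝ (pd1 v) := (contDiff_pd1 hv).differentiable one_ne_zero
  have hg2d : Differentiable ℝ (pd2 v) := (contDiff_pd2 hv).differentiable one_ne_zero
  -- 2-variable differentiability of E1
  have hN : DifferentiableAt ℝ (fun y : ℝ×ℝ => y.1^2+y.2^2) x :=
    (differentiableAt_fst.pow 2).add (differentiableAt_snd.pow 2)
  have hVcomp : DifferentiableAt ℝ (fun y => v (inv2 y)) x :=
    (hvd (inv2 x)).comp x (diff_inv2 hx)
  have hg1comp : DifferentiableAt ℝ (fun y => pd1 v (inv2 y)) x :=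
    (hg1d (inv2 x)).comp x (diff_inv2 hx)
  have hg2comp : DifferentiableAt ℝ (fun y => pd2 v (inv2 y)) x :=
    (hg2d (inv2 x)).comp x (diff_inv2 hx)
  have hAdiff : DifferentiableAt ℝ
      (fun y : ℝ×ℝ => (y.1^2+y.2^2-2*y.1^2)/(y.1^2+y.2^2)) x := by
    simp only [div_eq_mul_inv]
    exact (hN.sub ((differentiableAt_fst.pow 2).const_mul 2)).mul (hN.inv hne)
  have hBdiff : DifferentiableAt ℝ
      (fun y : ℝ×ℝ => -(2*y.1*y.2)/(y.1^2+y.2^2)) x := by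
    simp only [div_eq_mul_inv]
    exact (((differentiableAt_fst.const_mul 2).mul differentiableAt_snd).neg).mul (hN.inv hne)
  have hdiffE1 : DifferentiableAt ℝ (E1 v) x := by
    have : DifferentiableAt ℝ (fun y : ℝ×ℝ =>
        2*y.1 * v (inv2 y) + pd1 v (inv2 y) * ((y.1^2+y.2^2-2*y.1^2)/(y.1^2+y.2^2))
          + pd2 v (inv2 y) * (-(2*y.1*y.2)/(y.1^2+y.2^2))) x :=
      (((differentiableAt_fst.const_mul 2).mul hVcomp).add (hg1comp.mul hAdiff)).add
        (hg2comp.mul hBdiff)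
    exact this
  -- line derivatives
  have hden : HasDerivAt (fun t => t^2+x.2^2) (2*x.1) x.1 := by
    simpa using (hasDerivAt_pow 2 x.1).add_const (x.2^2)
  have hγ1 : HasDerivAt (fun t => t/(t^2+x.2^2)) ((x.2^2-x.1^2)/(x.1^2+x.2^2)^2) x.1 := by
    have := (hasDerivAt_id x.1).div hden hne
    refine this.congr_deriv ?_; simp only [id]
    field_simp; ring
  have hγ2 : HasDerivAt (fun t => x.2/(t^2+x.2^2)) (-(2*x.1*x.2)/(x.1^2+x.2^2)^2) x.1 := by
    have := (hasDerivAt_const x.1 x.2).div hden hne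
    refine this.congr_deriv ?_
    field_simp; ring
  have h2t : HasDerivAt (fun t : ℝ => 2*t) 2 x.1 := by
    simpa using (hasDerivAt_id x.1).const_mul (2:ℝ)
  have hVc := hasDerivAt_comp2 hγ1 hγ2 (hvd _)
  have hg1c := hasDerivAt_comp2 hγ1 hγ2 (hg1d _)
  have hg2c := hasDerivAt_comp2 hγ1 hγ2 (hg2d _)
  have hA : HasDerivAt (fun t => (t^2+x.2^2-2*t^2)/(t^2+x.2^2))
      (-(4*x.1*x.2^2)/(x.1^2+x.2^2)^2) x.1 := by
    have hnum : HasDerivAt (fun t => t^2+x.2^2-2*t^2) (2*x.1-4*x.1) x.1 := by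
      have := hden.sub ((hasDerivAt_pow 2 x.1).const_mul 2)
      refine this.congr_deriv ?_
      push_cast; ring
    have := hnum.div hden hne
    refine this.congr_deriv ?_
    field_simp; ring
  have hB : HasDerivAt (fun t => -(2*t*x.2)/(t^2+x.2^2))
      ((2*x.2*(x.1^2-x.2^2))/(x.1^2+x.2^2)^2) x.1 := by
    have hnum : HasDerivAt (fun t => -(2*t*x.2)) (-(2*x.2)) x.1 := by
      exact (h2t.mul_const x.2).neg
    have := hnum.div hden hne
    refine this.congr_deriv ?_
    field_simp; ring
  have T1 := h2t.mul hVc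
  have T2 := hg1c.mul hA
  have T3 := hg2c.mul hB
  have H := (T1.add T2).add T3
  exact pd1_eq' (fun t =>
      2*t * v (t/(t^2+x.2^2), x.2/(t^2+x.2^2))
        + pd1 v (t/(t^2+x.2^2), x.2/(t^2+x.2^2)) * ((t^2+x.2^2-2*t^2)/(t^2+x.2^2))
        + pd2 v (t/(t^2+x.2^2), x.2/(t^2+x.2^2)) * (-(2*t*x.2)/(t^2+x.2^2)))
    hdiffE1 (fun t => by simp only [E1, inv2]) H

lemma pd2E2 (v : ℝ×ℝ→ℝ) (hv : ContDiff ℝ 2 v) (x : ℝ×ℝ) (hx : x ≠ 0) :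
    pd2 (E2 v) x =
      (2 * v (inv2 x)
        + 2*x.2 * (-(2*x.1*x.2)/(x.1^2+x.2^2)^2 * pd1 v (inv2 x)
            + (x.1^2-x.2^2)/(x.1^2+x.2^2)^2 * pd2 v (inv2 x))
      + ((-(2*x.1*x.2)/(x.1^2+x.2^2)^2 * pd1 (pd1 v) (inv2 x)
            + (x.1^2-x.2^2)/(x.1^2+x.2^2)^2 * pd2 (pd1 v) (inv2 x))
          * (-(2*x.1*x.2)/(x.1^2+x.2^2))
         + pd1 v (inv2 x) * ((2*x.1*(x.2^2-x.1^2))/(x.1^2+x.2^2)^2)))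
      + ((-(2*x.1*x.2)/(x.1^2+x.2^2)^2 * pd1 (pd2 v) (inv2 x)
            + (x.1^2-x.2^2)/(x.1^2+x.2^2)^2 * pd2 (pd2 v) (inv2 x))
          * ((x.1^2+x.2^2-2*x.2^2)/(x.1^2+x.2^2))
         + pd2 v (inv2 x) * (-(4*x.1^2*x.2)/(x.1^2+x.2^2)^2)) := by
  have hne : x.1^2+x.2^2 ≠ 0 := (n_pos hx).ne'
  have hvd : Differentiable ℝ v := hv.differentiable (by norm_num)
  have hg1d : Differentiable ℝ (pd1 v) := (contDiff_pd1 hv).differentiable one_ne_zero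
  have hg2d : Differentiable ℝ (pd2 v) := (contDiff_pd2 hv).differentiable one_ne_zero
  have hN : DifferentiableAt ℝ (fun y : ℝ×ℝ => y.1^2+y.2^2) x :=
    (differentiableAt_fst.pow 2).add (differentiableAt_snd.pow 2)
  have hVcomp : DifferentiableAt ℝ (fun y => v (inv2 y)) x :=
    (hvd (inv2 x)).comp x (diff_inv2 hx)
  have hg1comp : DifferentiableAt ℝ (fun y => pd1 v (inv2 y)) x :=
    (hg1d (inv2 x)).comp x (diff_inv2 hx)
  have hg2comp : DifferentiableAt ℝ (fun y => pd2 v (inv2 y)) x :=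
    (hg2d (inv2 x)).comp x (diff_inv2 hx)
  have hAdiff : DifferentiableAt ℝ
      (fun y : ℝ×ℝ => -(2*y.1*y.2)/(y.1^2+y.2^2)) x := by
    simp only [div_eq_mul_inv]
    exact (((differentiableAt_fst.const_mul 2).mul differentiableAt_snd).neg).mul (hN.inv hne)
  have hBdiff : DifferentiableAt ℝ
      (fun y : ℝ×ℝ => (y.1^2+y.2^2-2*y.2^2)/(y.1^2+y.2^2)) x := by
    simp only [div_eq_mul_inv]
    exact (hN.sub ((differentiableAt_snd.pow 2).const_mul 2)).mul (hN.inv hne)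
  have hdiffE2 : DifferentiableAt ℝ (E2 v) x := by
    have : DifferentiableAt ℝ (fun y : ℝ×ℝ =>
        2*y.2 * v (inv2 y) + pd1 v (inv2 y) * (-(2*y.1*y.2)/(y.1^2+y.2^2))
          + pd2 v (inv2 y) * ((y.1^2+y.2^2-2*y.2^2)/(y.1^2+y.2^2))) x :=
      (((differentiableAt_snd.const_mul 2).mul hVcomp).add (hg1comp.mul hAdiff)).add
        (hg2comp.mul hBdiff)
    exact this
  -- line derivatives (second coordinate)
  have hden : HasDerivAt (fun t => x.1^2+t^2) (2*x.2) x.2 := by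
    simpa using (hasDerivAt_pow 2 x.2).const_add (x.1^2)
  have hγ1 : HasDerivAt (fun t => x.1/(x.1^2+t^2)) (-(2*x.1*x.2)/(x.1^2+x.2^2)^2) x.2 := by
    have := (hasDerivAt_const x.2 x.1).div hden hne
    refine this.congr_deriv ?_
    field_simp; ring
  have hγ2 : HasDerivAt (fun t => t/(x.1^2+t^2)) ((x.1^2-x.2^2)/(x.1^2+x.2^2)^2) x.2 := by
    have := (hasDerivAt_id x.2).div hden hne
    refine this.congr_deriv ?_; simp only [id]
    field_simp; ring
  have h2t : HasDerivAt (fun t : ℝ => 2*t) 2 x.2 := by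
    simpa using (hasDerivAt_id x.2).const_mul (2:ℝ)
  have hVc := hasDerivAt_comp2 hγ1 hγ2 (hvd _)
  have hg1c := hasDerivAt_comp2 hγ1 hγ2 (hg1d _)
  have hg2c := hasDerivAt_comp2 hγ1 hγ2 (hg2d _)
  have hA : HasDerivAt (fun t => -(2*x.1*t)/(x.1^2+t^2))
      ((2*x.1*(x.2^2-x.1^2))/(x.1^2+x.2^2)^2) x.2 := by
    have hnum : HasDerivAt (fun t : ℝ => -(2*x.1*t)) (-(2*x.1)) x.2 := by
      have := ((hasDerivAt_id x.2).const_mul (2*x.1)).neg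
      refine this.congr_deriv ?_ <;> simp
    have := hnum.div hden hne
    refine this.congr_deriv ?_
    field_simp; ring
  have hB : HasDerivAt (fun t => (x.1^2+t^2-2*t^2)/(x.1^2+t^2))
      (-(4*x.1^2*x.2)/(x.1^2+x.2^2)^2) x.2 := by
    have hnum : HasDerivAt (fun t => x.1^2+t^2-2*t^2) (2*x.2-4*x.2) x.2 := by
      have := hden.sub ((hasDerivAt_pow 2 x.2).const_mul 2)
      refine this.congr_deriv ?_
      push_cast; ring
    have := hnum.div hden hne
    refine this.congr_deriv ?_
    field_simp; ring
  have T1 := h2t.mul hVc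
  have T2 := hg1c.mul hA
  have T3 := hg2c.mul hB
  have H := (T1.add T2).add T3
  exact pd2_eq' (fun t =>
      2*t * v (x.1/(x.1^2+t^2), t/(x.1^2+t^2))
        + pd1 v (x.1/(x.1^2+t^2), t/(x.1^2+t^2)) * (-(2*x.1*t)/(x.1^2+t^2))
        + pd2 v (x.1/(x.1^2+t^2), t/(x.1^2+t^2)) * ((x.1^2+t^2-2*t^2)/(x.1^2+t^2)))
    hdiffE2 (fun t => by simp only [E2, inv2]) H


/-- For `w(x) = |x|² v(x/|x|²)` with `v` of class `C²`, for `x ≠ 0`: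
`Δw(x) = 4 v(i(x)) - 4⟨∇v(i(x)), i(x)⟩ + |x|⁻² Δv(i(x))`. -/
theorem lap_of_inverted_weight (v : ℝ × ℝ → ℝ) (hv : ContDiff ℝ 2 v)
    (x : ℝ × ℝ) (hx : x ≠ 0) :
    lap (fun y => (y.1 ^ 2 + y.2 ^ 2) * v (inv2 y)) x =
      4 * v (inv2 x)
        - 4 * (pd1 v (inv2 x) * (inv2 x).1 + pd2 v (inv2 x) * (inv2 x).2)
        + (x.1 ^ 2 + x.2 ^ 2)⁻¹ * lap v (inv2 x) := by
  have hne : x.1^2+x.2^2 ≠ 0 := (n_pos hx).ne'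
  have hmem : {y : ℝ×ℝ | y ≠ 0} ∈ nhds x := isOpen_ne.mem_nhds hx
  have hE1ev : pd1 (fun y => (y.1 ^ 2 + y.2 ^ 2) * v (inv2 y)) =ᶠ[nhds x] E1 v := by
    filter_upwards [hmem] with y hy using pd1W v hv y hy
  have hE2ev : pd2 (fun y => (y.1 ^ 2 + y.2 ^ 2) * v (inv2 y)) =ᶠ[nhds x] E2 v := by
    filter_upwards [hmem] with y hy using pd2W v hv y hy
  have e1 : pd1 (pd1 (fun y => (y.1 ^ 2 + y.2 ^ 2) * v (inv2 y))) x = pd1 (E1 v) x := by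
    show fderiv ℝ (pd1 (fun y => (y.1 ^ 2 + y.2 ^ 2) * v (inv2 y))) x (1,0)
        = fderiv ℝ (E1 v) x (1,0)
    rw [hE1ev.fderiv_eq]
  have e2 : pd2 (pd2 (fun y => (y.1 ^ 2 + y.2 ^ 2) * v (inv2 y))) x = pd2 (E2 v) x := by
    show fderiv ℝ (pd2 (fun y => (y.1 ^ 2 + y.2 ^ 2) * v (inv2 y))) x (0,1)
        = fderiv ℝ (E2 v) x (0,1)
    rw [hE2ev.fderiv_eq]
  show pd1 (pd1 (fun y => (y.1 ^ 2 + y.2 ^ 2) * v (inv2 y))) x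
      + pd2 (pd2 (fun y => (y.1 ^ 2 + y.2 ^ 2) * v (inv2 y))) x = _
  rw [e1, e2, pd1E1 v hv x hx, pd2E2 v hv x hx, schwarz hv (inv2 x)]
  simp only [lap, inv2]
  field_simp
  ring
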